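/- Let λ, μ, ν > 0. With ∇ the unique ℝ-bilinear map satisfying the Koszul formula for (V, g, [·,·]) and R(A,B)C := ∇_A(∇_B C) − ∇_B(∇_A C) − ∇_{[A,B]} C, the Riemannian dual space satisfies g(R(X,Y)Y, X) = ((λ²+μ²−ν²)² + 4ν²(μ²−ν²))/(λμν)², g(R(X,Z)Z, X) = ((λ²−μ²+ν²)² − 4μ²(μ²−ν²))/(λμν)², and g(R(Y,Z)Z, Y) = −((λ²+μ²+ν²)² + 2(λ⁴−μ⁴−ν⁴))/(λμν)². -/
import Mathlib


/-- The Euclidean inner product on `ℝ³` making `X, Y, Z` orthonormal. -/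
def gEuc (v w : Fin 3 → ℝ) : ℝ := v 0 * w 0 + v 1 * w 1 + v 2 * w 2

set_option maxHeartbeats 2000000 in
theorem sectional_curvature_riemannian_dual_space
    (l m n : ℝ) (hl : 0 < l) (hm : 0 < m) (hn : 0 < n)
    (X Y Z : Fin 3 → ℝ) (hX : X = ![1, 0, 0]) (hY : Y = ![0, 1, 0]) (hZ : Z = ![0, 0, 1])
    (bracket : (Fin 3 → ℝ) →ₗ[ℝ] (Fin 3 → ℝ) →ₗ[ℝ] (Fin 3 → ℝ))
    (halt : ∀ v, bracket v v = 0)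
    (hXY : bracket X Y = (2 * n / (l * m)) • Z)
    (hZX : bracket Z X = (2 * m / (l * n)) • Y)
    (hYZ : bracket Y Z = -((2 * l / (m * n)) • X))
    (nabla : (Fin 3 → ℝ) →ₗ[ℝ] (Fin 3 → ℝ) →ₗ[ℝ] (Fin 3 → ℝ))
    (hKoszul : ∀ A B C, 2 * gEuc (nabla A B) C =
      gEuc C (bracket A B) + gEuc B (bracket C A) - gEuc A (bracket B C))
    (R : (Fin 3 → ℝ) → (Fin 3 → ℝ) → (Fin 3 → ℝ) → (Fin 3 → ℝ))
    (hR : ∀ A B C, R A B C = nabla A (nabla B C) - nabla B (nabla A C) - nabla (bracket A B) C) :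
    gEuc (R X Y Y) X = ((l ^ 2 + m ^ 2 - n ^ 2) ^ 2 + 4 * n ^ 2 * (m ^ 2 - n ^ 2)) / (l * m * n) ^ 2 ∧
    gEuc (R X Z Z) X = ((l ^ 2 - m ^ 2 + n ^ 2) ^ 2 - 4 * m ^ 2 * (m ^ 2 - n ^ 2)) / (l * m * n) ^ 2 ∧
    gEuc (R Y Z Z) Y = -(((l ^ 2 + m ^ 2 + n ^ 2) ^ 2 + 2 * (l ^ 4 - m ^ 4 - n ^ 4)) / (l * m * n) ^ 2) := by
  have hanti : ∀ v w, bracket w v = -bracket v w := by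
    intro v w
    have h := halt (v + w)
    simp only [map_add, LinearMap.add_apply, halt v, halt w, zero_add, add_zero] at h
    exact eq_neg_of_add_eq_zero_left h
  have hYX : bracket Y X = -((2 * n / (l * m)) • Z) := by rw [hanti X Y, hXY]
  have hXZ : bracket X Z = -((2 * m / (l * n)) • Y) := by rw [hanti Z X, hZX]
  have hZY : bracket Z Y = (2 * l / (m * n)) • X := by rw [hanti Y Z, hYZ, neg_neg]
  have vext : ∀ v w : Fin 3 → ℝ, gEuc v X = gEuc w X → gEuc v Y = gEuc w Y →
      gEuc v Z = gEuc w Z → v = w := by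
    intro v w h0 h1 h2
    simp only [gEuc, hX, hY, hZ, Matrix.cons_val_zero, Matrix.cons_val_one, Matrix.head_cons,
      Matrix.cons_val_two, Matrix.tail_cons, mul_one, mul_zero, add_zero, zero_add] at h0 h1 h2
    funext i
    fin_cases i <;> assumption
  set P : ℝ := (2 * n / (l * m) + 2 * m / (l * n) + 2 * l / (m * n)) / 2 with hP
  set Q : ℝ := (2 * n / (l * m) - 2 * m / (l * n) - 2 * l / (m * n)) / 2 with hQ
  set S : ℝ := (2 * m / (l * n) - 2 * n / (l * m) - 2 * l / (m * n)) / 2 with hS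
  have nXX : nabla X X = (0 : Fin 3 → ℝ) := by
    refine vext _ _ ?_ ?_ ?_
    · have h := hKoszul X X X; simp only [hXY, hYX, hXZ, hZX, hYZ, hZY, halt] at h;
      simp [gEuc, hX, hY, hZ, Pi.smul_apply, smul_eq_mul] at h ⊢; try linarith [hP, hQ, hS]
    · have h := hKoszul X X Y; simp only [hXY, hYX, hXZ, hZX, hYZ, hZY, halt] at h;
      simp [gEuc, hX, hY, hZ, Pi.smul_apply, smul_eq_mul] at h ⊢; try linarith [hP, hQ, hS]
    · have h := hKoszul X X Z; simp only [hXY, hYX, hXZ, hZX, hYZ, hZY, halt] at h;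
      simp [gEuc, hX, hY, hZ, Pi.smul_apply, smul_eq_mul] at h ⊢; try linarith [hP, hQ, hS]
  have nYY : nabla Y Y = (0 : Fin 3 → ℝ) := by
    refine vext _ _ ?_ ?_ ?_
    · have h := hKoszul Y Y X; simp only [hXY, hYX, hXZ, hZX, hYZ, hZY, halt] at h;
      simp [gEuc, hX, hY, hZ, Pi.smul_apply, smul_eq_mul] at h ⊢; try linarith [hP, hQ, hS]
    · have h := hKoszul Y Y Y; simp only [hXY, hYX, hXZ, hZX, hYZ, hZY, halt] at h;
      simp [gEuc, hX, hY, hZ, Pi.smul_apply, smul_eq_mul] at h ⊢; try linarith [hP, hQ, hS]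
    · have h := hKoszul Y Y Z; simp only [hXY, hYX, hXZ, hZX, hYZ, hZY, halt] at h;
      simp [gEuc, hX, hY, hZ, Pi.smul_apply, smul_eq_mul] at h ⊢; try linarith [hP, hQ, hS]
  have nZZ : nabla Z Z = (0 : Fin 3 → ℝ) := by
    refine vext _ _ ?_ ?_ ?_
    · have h := hKoszul Z Z X; simp only [hXY, hYX, hXZ, hZX, hYZ, hZY, halt] at h;
      simp [gEuc, hX, hY, hZ, Pi.smul_apply, smul_eq_mul] at h ⊢; try linarith [hP, hQ, hS]
    · have h := hKoszul Z Z Y; simp only [hXY, hYX, hXZ, hZX, hYZ, hZY, halt] at h;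
      simp [gEuc, hX, hY, hZ, Pi.smul_apply, smul_eq_mul] at h ⊢; try linarith [hP, hQ, hS]
    · have h := hKoszul Z Z Z; simp only [hXY, hYX, hXZ, hZX, hYZ, hZY, halt] at h;
      simp [gEuc, hX, hY, hZ, Pi.smul_apply, smul_eq_mul] at h ⊢; try linarith [hP, hQ, hS]
  have nXY : nabla X Y = P • Z := by
    refine vext _ _ ?_ ?_ ?_
    · have h := hKoszul X Y X; simp only [hXY, hYX, hXZ, hZX, hYZ, hZY, halt] at h;
      simp [gEuc, hX, hY, hZ, Pi.smul_apply, smul_eq_mul] at h ⊢; try linarith [hP, hQ, hS]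
    · have h := hKoszul X Y Y; simp only [hXY, hYX, hXZ, hZX, hYZ, hZY, halt] at h;
      simp [gEuc, hX, hY, hZ, Pi.smul_apply, smul_eq_mul] at h ⊢; try linarith [hP, hQ, hS]
    · have h := hKoszul X Y Z; simp only [hXY, hYX, hXZ, hZX, hYZ, hZY, halt] at h;
      simp [gEuc, hX, hY, hZ, Pi.smul_apply, smul_eq_mul] at h ⊢; try linarith [hP, hQ, hS]
  have nXZ : nabla X Z = (-P) • Y := by
    refine vext _ _ ?_ ?_ ?_
    · have h := hKoszul X Z X; simp only [hXY, hYX, hXZ, hZX, hYZ, hZY, halt] at h;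
      simp [gEuc, hX, hY, hZ, Pi.smul_apply, smul_eq_mul] at h ⊢; try linarith [hP, hQ, hS]
    · have h := hKoszul X Z Y; simp only [hXY, hYX, hXZ, hZX, hYZ, hZY, halt] at h;
      simp [gEuc, hX, hY, hZ, Pi.smul_apply, smul_eq_mul] at h ⊢; try linarith [hP, hQ, hS]
    · have h := hKoszul X Z Z; simp only [hXY, hYX, hXZ, hZX, hYZ, hZY, halt] at h;
      simp [gEuc, hX, hY, hZ, Pi.smul_apply, smul_eq_mul] at h ⊢; try linarith [hP, hQ, hS]
  have nYX : nabla Y X = (-Q) • Z := by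
    refine vext _ _ ?_ ?_ ?_
    · have h := hKoszul Y X X; simp only [hXY, hYX, hXZ, hZX, hYZ, hZY, halt] at h;
      simp [gEuc, hX, hY, hZ, Pi.smul_apply, smul_eq_mul] at h ⊢; try linarith [hP, hQ, hS]
    · have h := hKoszul Y X Y; simp only [hXY, hYX, hXZ, hZX, hYZ, hZY, halt] at h;
      simp [gEuc, hX, hY, hZ, Pi.smul_apply, smul_eq_mul] at h ⊢; try linarith [hP, hQ, hS]
    · have h := hKoszul Y X Z; simp only [hXY, hYX, hXZ, hZX, hYZ, hZY, halt] at h;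
      simp [gEuc, hX, hY, hZ, Pi.smul_apply, smul_eq_mul] at h ⊢; try linarith [hP, hQ, hS]
  have nYZ : nabla Y Z = Q • X := by
    refine vext _ _ ?_ ?_ ?_
    · have h := hKoszul Y Z X; simp only [hXY, hYX, hXZ, hZX, hYZ, hZY, halt] at h;
      simp [gEuc, hX, hY, hZ, Pi.smul_apply, smul_eq_mul] at h ⊢; try linarith [hP, hQ, hS]
    · have h := hKoszul Y Z Y; simp only [hXY, hYX, hXZ, hZX, hYZ, hZY, halt] at h;
      simp [gEuc, hX, hY, hZ, Pi.smul_apply, smul_eq_mul] at h ⊢; try linarith [hP, hQ, hS]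
    · have h := hKoszul Y Z Z; simp only [hXY, hYX, hXZ, hZX, hYZ, hZY, halt] at h;
      simp [gEuc, hX, hY, hZ, Pi.smul_apply, smul_eq_mul] at h ⊢; try linarith [hP, hQ, hS]
  have nZX : nabla Z X = S • Y := by
    refine vext _ _ ?_ ?_ ?_
    · have h := hKoszul Z X X; simp only [hXY, hYX, hXZ, hZX, hYZ, hZY, halt] at h;
      simp [gEuc, hX, hY, hZ, Pi.smul_apply, smul_eq_mul] at h ⊢; try linarith [hP, hQ, hS]
    · have h := hKoszul Z X Y; simp only [hXY, hYX, hXZ, hZX, hYZ, hZY, halt] at h;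
      simp [gEuc, hX, hY, hZ, Pi.smul_apply, smul_eq_mul] at h ⊢; try linarith [hP, hQ, hS]
    · have h := hKoszul Z X Z; simp only [hXY, hYX, hXZ, hZX, hYZ, hZY, halt] at h;
      simp [gEuc, hX, hY, hZ, Pi.smul_apply, smul_eq_mul] at h ⊢; try linarith [hP, hQ, hS]
  have nZY : nabla Z Y = (-S) • X := by
    refine vext _ _ ?_ ?_ ?_
    · have h := hKoszul Z Y X; simp only [hXY, hYX, hXZ, hZX, hYZ, hZY, halt] at h;
      simp [gEuc, hX, hY, hZ, Pi.smul_apply, smul_eq_mul] at h ⊢; try linarith [hP, hQ, hS]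
    · have h := hKoszul Z Y Y; simp only [hXY, hYX, hXZ, hZX, hYZ, hZY, halt] at h;
      simp [gEuc, hX, hY, hZ, Pi.smul_apply, smul_eq_mul] at h ⊢; try linarith [hP, hQ, hS]
    · have h := hKoszul Z Y Z; simp only [hXY, hYX, hXZ, hZX, hYZ, hZY, halt] at h;
      simp [gEuc, hX, hY, hZ, Pi.smul_apply, smul_eq_mul] at h ⊢; try linarith [hP, hQ, hS]
  have hl' := hl.ne'
  have hm' := hm.ne'
  have hn' := hn.ne'
  refine ⟨?_, ?_, ?_⟩
  · have hRv := hR X Y Y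
    rw [nYY, nXY, hXY] at hRv
    simp only [map_zero, map_smul, LinearMap.smul_apply, nYZ, nZY] at hRv
    rw [hRv]
    simp [gEuc, hX, hY, hZ, Pi.smul_apply, smul_eq_mul, hP, hQ, hS]
    field_simp
    ring
  · have hRv := hR X Z Z
    rw [nZZ, nXZ, hXZ] at hRv
    simp only [map_zero, map_neg, LinearMap.neg_apply, map_smul, LinearMap.smul_apply, nZY, nYZ] at hRv
    rw [hRv]
    simp [gEuc, hX, hY, hZ, Pi.smul_apply, smul_eq_mul, hP, hQ, hS]
    field_simp
    ring
  · have hRv := hR Y Z Z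
    rw [nZZ, nYZ, hYZ] at hRv
    simp only [map_zero, map_neg, LinearMap.neg_apply, map_smul, LinearMap.smul_apply, nZX, nXZ] at hRv
    rw [hRv]
    simp [gEuc, hX, hY, hZ, Pi.smul_apply, smul_eq_mul, hP, hQ, hS]
    field_simp
    ring
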